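/- The set {1/7, 5/7} is the unique optimal set of two-means for P, and the second quantization error is V_2 = 69/3577. -/

import Mathlib

open MeasureTheory

set_option linter.unusedSectionVars false
set_option linter.unusedVariables false
set_option maxHeartbeats 1000000

noncomputable section

/-- The contractive similarity `S j x = x / 2^(j+1) + 1 - 1/2^(j-1)` (used for `j ≥ 1`). -/
def S (j : ℕ) (x : ℝ) : ℝ := x / 2 ^ (j + 1) + 1 - 1 / 2 ^ (j - 1)

/-- The similarity ratio `s j = 1/2^(j+1)`. -/
def s (j : ℕ) : ℝ := 1 / 2 ^ (j + 1)

/-- The probability vector: `p 1 = 1/4`, `p j = 3/2^(j+1)` for `j ≥ 2`. -/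
def p (j : ℕ) : ℝ := if j = 1 then 1 / 4 else 3 / 2 ^ (j + 1)

/-- `Sw ω = S_{ω_1} ∘ ⋯ ∘ S_{ω_k}`. -/
def Sw (ω : List ℕ) : ℝ → ℝ := ω.foldr (fun j f => S j ∘ f) id

/-- `pw ω = p_{ω_1} ⋯ p_{ω_k}`. -/
def pw (ω : List ℕ) : ℝ := (ω.map p).prod

/-- `sw ω = s_{ω_1} ⋯ s_{ω_k}`. -/
def sw (ω : List ℕ) : ℝ := (ω.map s).prod

/-- The basic interval `J_ω = S_ω([0,1])`. -/
def Jw (ω : List ℕ) : Set ℝ := Sw ω '' Set.Icc 0 1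

/-- The last letter of a word (junk value `0` for the empty word). -/
def wlast (ω : List ℕ) : ℕ := ω.getLastD 0

/-- `wext ω j = ω^-(ω_k + j)`: the word `ω` with its last letter increased by `j`. -/
def wext (ω : List ℕ) (j : ℕ) : List ℕ := ω.dropLast ++ [wlast ω + j]

/-- `J_{(ω,∞)} = ⋃_{j=1}^∞ J_{ω^-(ω_k+j)}`. -/
def Jinf (ω : List ℕ) : Set ℝ := ⋃ j : ℕ, Jw (wext ω (j + 1))

/-- `a(ω) = S_ω(4/7)`. -/
def aw (ω : List ℕ) : ℝ := Sw ω (4 / 7)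

/-- `a(ω,∞) = S_{ω^-(ω_k+1)}(4/7) + (8/7) s_{ω^-(ω_k+1)}`. -/
def ainf (ω : List ℕ) : ℝ := Sw (wext ω 1) (4 / 7) + (8 / 7) * sw (wext ω 1)

/-- A (nonempty) word over the alphabet `{1, 2, 3, …}`. -/
def IsWord (ω : List ℕ) : Prop := ω ≠ [] ∧ ∀ i ∈ ω, 1 ≤ i

/-- The invariance relation `P(A) = ∑_{j=1}^∞ p_j P(S_j⁻¹ A)`. -/
def Invariant (P : Measure ℝ) : Prop :=
  ∀ A : Set ℝ, MeasurableSet A →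
    P A = ∑' j : ℕ, ENNReal.ofReal (p (j + 1)) * P (S (j + 1) ⁻¹' A)

/-- The distortion error `∫ min_{a ∈ α} (x-a)² dP` of a set `α ⊆ ℝ`. -/
def distortion (P : Measure ℝ) (α : Set ℝ) : ℝ :=
  ∫ x, (⨅ a : α, (x - (a : ℝ)) ^ 2) ∂P

/-- The `n`-th quantization error for `P`. -/
def quantErr (P : Measure ℝ) (n : ℕ) : ℝ :=
  sInf {r : ℝ | ∃ α : Set ℝ, 1 ≤ α.ncard ∧ α.ncard ≤ n ∧ r = distortion P α}

/-- `α` is an optimal set of `n`-means for `P`. -/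
def IsOptimal (P : Measure ℝ) (n : ℕ) (α : Set ℝ) : Prop :=
  1 ≤ α.ncard ∧ α.ncard ≤ n ∧ distortion P α = quantErr P n

/-- `E(a(ω)) = ∫_{J_ω} (x - a(ω))² dP`. -/
def Ea (P : Measure ℝ) (ω : List ℕ) : ℝ := ∫ x in Jw ω, (x - aw ω) ^ 2 ∂P

/-- `E(a(ω,∞)) = ∫_{J_{(ω,∞)}} (x - a(ω,∞))² dP`. -/
def Eainf (P : Measure ℝ) (ω : List ℕ) : ℝ := ∫ x in Jinf ω, (x - ainf ω) ^ 2 ∂P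

/-- The Voronoi region `M(a|α)`. -/
def voronoi (α : Set ℝ) (a : ℝ) : Set ℝ := {x : ℝ | ∀ b ∈ α, |x - a| ≤ |x - b|}

namespace QAux
variable {P : Measure ℝ} [IsProbabilityMeasure P]

variable {P : Measure ℝ} [IsProbabilityMeasure P]

lemma S_cont (j : ℕ) : Continuous (S j) := by
  unfold S; fun_prop

lemma S_meas (j : ℕ) : Measurable (S j) := (S_cont j).measurable

lemma compl_null (hsupp : P (Set.Icc 0 1) = 1) : P (Set.Icc (0:ℝ) 1)ᶜ = 0 := by
  have h := measure_compl (measurableSet_Icc (a := (0:ℝ)) (b := 1)) (measure_ne_top P _)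
  rw [hsupp, measure_univ] at h
  simpa using h

lemma ae_mem_Icc (hsupp : P (Set.Icc 0 1) = 1) : ∀ᵐ x ∂P, x ∈ Set.Icc (0:ℝ) 1 := by
  rw [MeasureTheory.ae_iff]
  exact compl_null hsupp

lemma null_of_subset_compl (hsupp : P (Set.Icc 0 1) = 1) {s : Set ℝ}
    (h : s ⊆ (Set.Icc (0:ℝ) 1)ᶜ) : P s = 0 :=
  measure_mono_null h (compl_null hsupp)

lemma integrable_of_cont (hsupp : P (Set.Icc 0 1) = 1) (f : ℝ → ℝ) (hf : Continuous f) :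
    Integrable f P := by
  obtain ⟨C, hC⟩ := (isCompact_Icc (a := (0:ℝ)) (b := 1)).exists_bound_of_continuousOn
    hf.continuousOn
  refine ⟨hf.aestronglyMeasurable, HasFiniteIntegral.of_bounded (C := C) ?_⟩
  filter_upwards [ae_mem_Icc hsupp] with x hx
  exact hC x hx

lemma P_eq_sum (hinv : Invariant P) :
    P = Measure.sum (fun j => ENNReal.ofReal (p (j + 1)) • P.map (S (j + 1))) := by
  ext A hA
  rw [Measure.sum_apply _ hA, hinv A hA]
  congr 1; funext j
  rw [Measure.smul_apply, Measure.map_apply (S_meas (j+1)) hA, smul_eq_mul]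

lemma p_pos (j : ℕ) : 0 < p j := by
  unfold p; split <;> positivity

lemma master (hsupp : P (Set.Icc 0 1) = 1) (hinv : Invariant P) (f : ℝ → ℝ) (hf : Continuous f) :
    ∫ x, f x ∂P = ∑' j : ℕ, p (j + 1) * ∫ x, f (S (j + 1) x) ∂P := by
  have hint : Integrable f P := integrable_of_cont hsupp f hf
  have hint2 : Integrable f (Measure.sum (fun j => ENNReal.ofReal (p (j + 1)) • P.map (S (j + 1)))) := by
    rw [← P_eq_sum hinv]; exact hint
  conv_lhs => rw [P_eq_sum hinv]
  rw [integral_sum_measure hint2]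
  congr 1; funext j
  rw [integral_smul_measure, integral_map (S_meas (j+1)).aemeasurable hf.aestronglyMeasurable]
  rw [ENNReal.toReal_ofReal (p_pos (j+1)).le, smul_eq_mul]




lemma sumgeo (r : ℝ) (h0 : 0 ≤ r) (h1 : r < 1) (c : ℝ) :
    Summable (fun j:ℕ => c * r^j) :=
  (summable_geometric_of_lt_one h0 h1).mul_left c

lemma geom_tsum (c2 c4 c8 : ℝ) :
    ∑' j:ℕ, (c2*((2:ℝ)⁻¹)^j + c4*((4:ℝ)⁻¹)^j + c8*((8:ℝ)⁻¹)^j)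
      = 2*c2 + (4/3)*c4 + (8/7)*c8 := by
  have s2 := sumgeo (2:ℝ)⁻¹ (by norm_num) (by norm_num) c2
  have s4 := sumgeo (4:ℝ)⁻¹ (by norm_num) (by norm_num) c4
  have s8 := sumgeo (8:ℝ)⁻¹ (by norm_num) (by norm_num) c8
  rw [Summable.tsum_add (s2.add s4) s8, Summable.tsum_add s2 s4, tsum_mul_left, tsum_mul_left, tsum_mul_left,
      tsum_geometric_of_lt_one (by norm_num) (by norm_num),
      tsum_geometric_of_lt_one (by norm_num) (by norm_num),
      tsum_geometric_of_lt_one (by norm_num) (by norm_num)]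
  norm_num; ring

lemma summable_geo3 (c2 c4 c8 : ℝ) :
    Summable (fun j:ℕ => c2*((2:ℝ)⁻¹)^j + c4*((4:ℝ)⁻¹)^j + c8*((8:ℝ)⁻¹)^j) :=
  ((sumgeo _ (by norm_num) (by norm_num) c2).add
    (sumgeo _ (by norm_num) (by norm_num) c4)).add (sumgeo _ (by norm_num) (by norm_num) c8)

lemma tsum_delta_add (d : ℝ) (F : ℕ → ℝ) (hF : Summable F) :
    ∑' j:ℕ, ((if j = 0 then d else 0) + F j) = d + ∑' j, F j := by
  rw [Summable.tsum_add ⟨d, hasSum_ite_eq 0 d⟩ hF]; simp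

lemma int_lin (hsupp : P (Set.Icc 0 1) = 1) (c d : ℝ) :
    ∫ x, (c*x + d) ∂P = c * (∫ x, x ∂P) + d := by
  have h1 : Integrable (fun x:ℝ => c*x) P := integrable_of_cont hsupp _ (by fun_prop)
  rw [integral_add h1 (integrable_const d), integral_const_mul, integral_const]
  simp

lemma int_sq (hsupp : P (Set.Icc 0 1) = 1) (c d : ℝ) :
    ∫ x, (c*x + d)^2 ∂P
      = c^2 * (∫ x, x^2 ∂P) + 2*c*d*(∫ x, x ∂P) + d^2 := by
  have h : (fun x => (c*x + d)^2) = fun x => c^2*x^2 + ((2*c*d)*x + d^2) := by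
    funext x; ring
  have h1 : Integrable (fun x:ℝ => c^2*x^2) P := integrable_of_cont hsupp _ (by fun_prop)
  have h2 : Integrable (fun x:ℝ => (2*c*d)*x + d^2) P := integrable_of_cont hsupp _ (by fun_prop)
  have hin : ∫ x, ((2*c*d)*x + d^2) ∂P = (2*c*d) * (∫ x, x ∂P) + d^2 := int_lin hsupp _ _
  rw [h, integral_add h1 h2, hin, integral_const_mul]
  ring

lemma m1_eq (hsupp : P (Set.Icc 0 1) = 1) (hinv : Invariant P) : ∫ x, x ∂P = 4/7 := by
  set m1 := ∫ x, x ∂P with hm1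
  have h := master hsupp hinv (fun x => x) continuous_id
  have hterm : ∀ j:ℕ, ∫ x, S (j+1) x ∂P = (1/2^(j+2)) * m1 + (1 - 1/2^j) := by
    intro j
    have e : (fun x => S (j+1) x) = fun x => (1/2^(j+2)) * x + (1 - 1/2^j) := by
      funext x; unfold S; simp only [Nat.add_sub_cancel]
      have h2 : (0:ℝ) < 2^(j+2) := by positivity
      field_simp; ring
    rw [e, int_lin hsupp]
  simp only [hterm] at h
  have hfun : (fun j:ℕ => p (j+1) * ((1/2^(j+2)) * m1 + (1 - 1/2^j)))
      = fun j => (if j = 0 then -(m1/8) else 0)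
        + ((3/4)*((2:ℝ)⁻¹)^j + (3*m1/16 - 3/4)*((4:ℝ)⁻¹)^j + 0*((8:ℝ)⁻¹)^j) := by
    funext j
    rcases j with _ | i
    · simp [p]; ring
    · rw [p, if_neg (by omega)]
      simp only [if_neg (Nat.succ_ne_zero i)]
      have h4 : ((4:ℝ))^(i+1) = ((2:ℝ)^(i+1))^2 := by
        rw [show (4:ℝ) = 2^2 by norm_num, ← pow_mul, ← pow_mul, Nat.mul_comm]
      have h23 : (2:ℝ)^(i+1+2) = 2^(i+1) * 4 := by rw [pow_add]; norm_num
      have ht : (0:ℝ) < 2^(i+1) := by positivity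
      rw [inv_pow, inv_pow, inv_pow, h4, h23]
      field_simp; ring
  rw [hfun, tsum_delta_add _ _ (summable_geo3 _ _ _), geom_tsum] at h
  linarith

lemma m2_eq (hsupp : P (Set.Icc 0 1) = 1) (hinv : Invariant P) : ∫ x, x^2 ∂P = 208/511 := by
  set m2 := ∫ x, x^2 ∂P with hm2
  have hm1 := m1_eq hsupp hinv
  have h := master hsupp hinv (fun x => x^2) (by fun_prop)
  have hterm : ∀ j:ℕ, ∫ x, (S (j+1) x)^2 ∂P
      = (1/2^(j+2))^2 * m2 + 2*(1/2^(j+2))*(1 - 1/2^j)*(4/7) + (1 - 1/2^j)^2 := by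
    intro j
    have e : (fun x => (S (j+1) x)^2) = fun x => ((1/2^(j+2)) * x + (1 - 1/2^j))^2 := by
      funext x; unfold S; simp only [Nat.add_sub_cancel]
      have h2 : (0:ℝ) < 2^(j+2) := by positivity
      field_simp; ring
    rw [e, int_sq hsupp, hm1]
  simp only [hterm] at h
  have hfun : (fun j:ℕ => p (j+1) * ((1/2^(j+2))^2 * m2 + 2*(1/2^(j+2))*(1 - 1/2^j)*(4/7) + (1 - 1/2^j)^2))
      = fun j => (if j = 0 then -(m2/32) else 0)
        + ((3/4)*((2:ℝ)⁻¹)^j + (3*(4/7)/8 - 3/2)*((4:ℝ)⁻¹)^j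
            + (3*m2/64 - 3*(4/7)/8 + 3/4)*((8:ℝ)⁻¹)^j) := by
    funext j
    rcases j with _ | i
    · simp [p]; ring
    · rw [p, if_neg (by omega)]
      simp only [if_neg (Nat.succ_ne_zero i)]
      have h4 : ((4:ℝ))^(i+1) = ((2:ℝ)^(i+1))^2 := by
        rw [show (4:ℝ) = 2^2 by norm_num, ← pow_mul, ← pow_mul, Nat.mul_comm]
      have h8 : ((8:ℝ))^(i+1) = ((2:ℝ)^(i+1))^3 := by
        rw [show (8:ℝ) = 2^3 by norm_num, ← pow_mul, ← pow_mul, Nat.mul_comm]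
      have h23 : (2:ℝ)^(i+1+2) = 2^(i+1) * 4 := by rw [pow_add]; norm_num
      have ht : (0:ℝ) < 2^(i+1) := by positivity
      rw [inv_pow, inv_pow, inv_pow, h4, h8, h23]
      field_simp; ring
  rw [hfun, tsum_delta_add _ _ (summable_geo3 _ _ _), geom_tsum] at h
  linarith




lemma S1_eq : S 1 = fun x : ℝ => x / 4 := by
  funext x; unfold S; norm_num

lemma S2_eq : S 2 = fun x : ℝ => x / 8 + 1 / 2 := by
  funext x; unfold S; norm_num; ring

lemma Sk_lb (k : ℕ) (hk : 2 ≤ k) {x : ℝ} (hx : 0 ≤ x) : 1 - 1/2^(k-1) ≤ S k x := by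
  unfold S
  have : 0 ≤ x / 2^(k+1) := by positivity
  linarith

lemma Sk_ge_half (k : ℕ) (hk : 2 ≤ k) {x : ℝ} (hx : 0 ≤ x) : 1/2 ≤ S k x := by
  have h := Sk_lb k hk hx
  have h2 : (1:ℝ)/2^(k-1) ≤ 1/2 := by
    apply div_le_div_of_nonneg_left (by norm_num) (by norm_num)
    calc (2:ℝ) = 2^1 := (pow_one 2).symm
    _ ≤ 2^(k-1) := by
      apply pow_le_pow_right₀ (by norm_num)
      omega
  linarith

lemma Sk_ge_34 (k : ℕ) (hk : 3 ≤ k) {x : ℝ} (hx : 0 ≤ x) : 3/4 ≤ S k x := by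
  have h := Sk_lb k (by omega) hx
  have h2 : (1:ℝ)/2^(k-1) ≤ 1/4 := by
    apply div_le_div_of_nonneg_left (by norm_num) (by norm_num)
    calc (4:ℝ) = 2^2 := by norm_num
    _ ≤ 2^(k-1) := by
      apply pow_le_pow_right₀ (by norm_num)
      omega
  linarith

-- preimage subset lemmas: if A ⊆ Iio c with S k x ≥ c for x ≥ 0, then preimage ⊆ Iio 0
lemma preim_null (hsupp : P (Set.Icc 0 1) = 1) {B : Set ℝ}
    (h : B ⊆ (Set.Icc (0:ℝ) 1)ᶜ) : P B = 0 :=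
  measure_mono_null h (compl_null hsupp)

lemma R1 (hsupp : P (Set.Icc 0 1) = 1) (hinv : Invariant P) {A : Set ℝ}
    (hA : MeasurableSet A) (hsub : A ⊆ Set.Icc 0 (1/4)) :
    P A = ENNReal.ofReal (1/4) * P (S 1 ⁻¹' A) := by
  rw [hinv A hA]
  rw [tsum_eq_single 0 ?_]
  · norm_num [p]
  · intro j hj
    have hnull : P (S (j+1) ⁻¹' A) = 0 := by
      apply preim_null hsupp
      intro x hx
      simp only [Set.mem_preimage] at hx
      have h14 : S (j+1) x ≤ 1/4 := (hsub hx).2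
      simp only [Set.mem_compl_iff, Set.mem_Icc, not_and_or, not_le]
      by_contra hc
      push_neg at hc
      obtain ⟨hx0, -⟩ := hc
      have := Sk_ge_half (j+1) (by omega) hx0
      linarith
    rw [hnull, mul_zero]

lemma R2 (hsupp : P (Set.Icc 0 1) = 1) (hinv : Invariant P) {A : Set ℝ}
    (hA : MeasurableSet A) (hsub : A ⊆ Set.Icc (1/2) (5/8)) :
    P A = ENNReal.ofReal (3/8) * P (S 2 ⁻¹' A) := by
  rw [hinv A hA]
  rw [tsum_eq_single 1 ?_]
  · norm_num [p]
  · intro j hj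
    have hnull : P (S (j+1) ⁻¹' A) = 0 := by
      apply preim_null hsupp
      intro x hx
      simp only [Set.mem_preimage] at hx
      have hmem := hsub hx
      simp only [Set.mem_compl_iff, Set.mem_Icc, not_and_or, not_le]
      rcases Nat.lt_or_ge j 1 with h1 | h1
      · -- j = 0, S 1 x = x/4 ∈ [1/2, 5/8] → x ≥ 2
        interval_cases j
        right
        have : S 1 x = x / 4 := by rw [S1_eq]
        rw [this] at hmem
        linarith [hmem.1]
      · -- j ≥ 2, so k = j+1 ≥ 3 : S k x ≥ 3/4 for x ≥ 0, but S k x ≤ 5/8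
        left
        by_contra hc
        push_neg at hc
        have := Sk_ge_34 (j+1) (by omega) hc
        linarith [hmem.2]
    rw [hnull, mul_zero]

lemma gap1_null (hsupp : P (Set.Icc 0 1) = 1) (hinv : Invariant P) :
    P (Set.Ioo (1/4 : ℝ) (1/2)) = 0 := by
  rw [hinv _ measurableSet_Ioo]
  have : ∀ j : ℕ, ENNReal.ofReal (p (j+1)) * P (S (j+1) ⁻¹' Set.Ioo (1/4 : ℝ) (1/2)) = 0 := by
    intro j
    have hnull : P (S (j+1) ⁻¹' Set.Ioo (1/4 : ℝ) (1/2)) = 0 := by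
      apply preim_null hsupp
      intro x hx
      simp only [Set.mem_preimage, Set.mem_Ioo] at hx
      simp only [Set.mem_compl_iff, Set.mem_Icc, not_and_or, not_le]
      rcases Nat.lt_or_ge j 1 with h1 | h1
      · interval_cases j
        right
        have : S 1 x = x / 4 := by rw [S1_eq]
        rw [this] at hx
        linarith [hx.1]
      · left
        by_contra hc
        push_neg at hc
        have := Sk_ge_half (j+1) (by omega) hc
        linarith [hx.2]
    rw [hnull, mul_zero]
  simp only [this, tsum_zero]

lemma gap2_null (hsupp : P (Set.Icc 0 1) = 1) (hinv : Invariant P) :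
    P (Set.Ioo (5/8 : ℝ) (3/4)) = 0 := by
  rw [hinv _ measurableSet_Ioo]
  have : ∀ j : ℕ, ENNReal.ofReal (p (j+1)) * P (S (j+1) ⁻¹' Set.Ioo (5/8 : ℝ) (3/4)) = 0 := by
    intro j
    have hnull : P (S (j+1) ⁻¹' Set.Ioo (5/8 : ℝ) (3/4)) = 0 := by
      apply preim_null hsupp
      intro x hx
      simp only [Set.mem_preimage, Set.mem_Ioo] at hx
      simp only [Set.mem_compl_iff, Set.mem_Icc, not_and_or, not_le]
      rcases Nat.lt_or_ge j 1 with h1 | h1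
      · interval_cases j
        right
        have : S 1 x = x / 4 := by rw [S1_eq]
        rw [this] at hx
        linarith [hx.1]
      · rcases Nat.lt_or_ge j 2 with h2 | h2
        · interval_cases j
          right
          have : S 2 x = x / 8 + 1/2 := by rw [S2_eq]
          rw [this] at hx
          linarith [hx.1]
        · left
          by_contra hc
          push_neg at hc
          have := Sk_ge_34 (j+1) (by omega) hc
          linarith [hx.2]
    rw [hnull, mul_zero]
  simp only [this, tsum_zero]

lemma restrict_J1 (hsupp : P (Set.Icc 0 1) = 1) (hinv : Invariant P) :
    P.restrict (Set.Icc 0 (1/4)) = ENNReal.ofReal (1/4) • P.map (S 1) := by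
  ext B hB
  rw [Measure.restrict_apply hB, Measure.smul_apply, Measure.map_apply (S_meas 1) hB,
      smul_eq_mul]
  have h1 := R1 hsupp hinv (hB.inter measurableSet_Icc) Set.inter_subset_right
  rw [h1]
  congr 1
  have hpre : S 1 ⁻¹' (B ∩ Set.Icc 0 (1/4)) = (S 1 ⁻¹' B) ∩ Set.Icc 0 1 := by
    rw [Set.preimage_inter]
    congr 1
    rw [S1_eq]
    ext x
    simp only [Set.mem_preimage, Set.mem_Icc]
    constructor
    · rintro ⟨h1, h2⟩; constructor <;> linarith
    · rintro ⟨h1, h2⟩; constructor <;> linarith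
  rw [hpre]
  exact measure_inter_conull (compl_null hsupp)

lemma restrict_J2 (hsupp : P (Set.Icc 0 1) = 1) (hinv : Invariant P) :
    P.restrict (Set.Icc (1/2) (5/8)) = ENNReal.ofReal (3/8) • P.map (S 2) := by
  ext B hB
  rw [Measure.restrict_apply hB, Measure.smul_apply, Measure.map_apply (S_meas 2) hB,
      smul_eq_mul]
  have h1 := R2 hsupp hinv (hB.inter measurableSet_Icc) Set.inter_subset_right
  rw [h1]
  congr 1
  have hpre : S 2 ⁻¹' (B ∩ Set.Icc (1/2) (5/8)) = (S 2 ⁻¹' B) ∩ Set.Icc 0 1 := by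
    rw [Set.preimage_inter]
    congr 1
    rw [S2_eq]
    ext x
    simp only [Set.mem_preimage, Set.mem_Icc]
    constructor
    · rintro ⟨h1, h2⟩; constructor <;> linarith
    · rintro ⟨h1, h2⟩; constructor <;> linarith
  rw [hpre]
  exact measure_inter_conull (compl_null hsupp)

lemma intJ1 (hsupp : P (Set.Icc 0 1) = 1) (hinv : Invariant P) (f : ℝ → ℝ)
    (hf : Continuous f) :
    ∫ x in Set.Icc 0 (1/4), f x ∂P = (1/4) * ∫ x, f (x/4) ∂P := by
  have : ∫ x in Set.Icc 0 (1/4), f x ∂P = ∫ x, f x ∂(P.restrict (Set.Icc 0 (1/4))) := rfl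
  rw [this, restrict_J1 hsupp hinv, integral_smul_measure,
      integral_map (S_meas 1).aemeasurable hf.aestronglyMeasurable,
      ENNReal.toReal_ofReal (by norm_num : (0:ℝ) ≤ 1/4), smul_eq_mul]
  congr 1
  apply integral_congr_ae
  filter_upwards with x
  rw [S1_eq]

lemma intJ2 (hsupp : P (Set.Icc 0 1) = 1) (hinv : Invariant P) (f : ℝ → ℝ)
    (hf : Continuous f) :
    ∫ x in Set.Icc (1/2) (5/8), f x ∂P = (3/8) * ∫ x, f (x/8 + 1/2) ∂P := by
  have : ∫ x in Set.Icc (1/2) (5/8), f x ∂P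
      = ∫ x, f x ∂(P.restrict (Set.Icc (1/2) (5/8))) := rfl
  rw [this, restrict_J2 hsupp hinv, integral_smul_measure,
      integral_map (S_meas 2).aemeasurable hf.aestronglyMeasurable,
      ENNReal.toReal_ofReal (by norm_num : (0:ℝ) ≤ 3/8), smul_eq_mul]
  congr 1
  apply integral_congr_ae
  filter_upwards with x
  rw [S2_eq]

lemma massJ1 (hsupp : P (Set.Icc 0 1) = 1) (hinv : Invariant P) :
    (P (Set.Icc 0 (1/4))).toReal = 1/4 := by
  have h := intJ1 hsupp hinv (fun _ => (1:ℝ)) continuous_const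
  simp only [setIntegral_const, integral_const, measure_univ, ENNReal.toReal_one,
    smul_eq_mul, mul_one] at h
  simpa [Measure.real, Measure.restrict_apply_univ] using h

lemma massJ2 (hsupp : P (Set.Icc 0 1) = 1) (hinv : Invariant P) :
    (P (Set.Icc (1/2) (5/8))).toReal = 3/8 := by
  have h := intJ2 hsupp hinv (fun _ => (1:ℝ)) continuous_const
  simp only [setIntegral_const, integral_const, measure_univ, ENNReal.toReal_one,
    smul_eq_mul, mul_one] at h
  simpa [Measure.real, Measure.restrict_apply_univ] using h

lemma split1 (hsupp : P (Set.Icc 0 1) = 1) (hinv : Invariant P) (f : ℝ → ℝ)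
    (hf : Integrable f P) :
    ∫ x, f x ∂P
      = (∫ x in Set.Icc 0 (1/4), f x ∂P) + ∫ x in Set.Icc (1/2) 1, f x ∂P := by
  have hres : P.restrict (Set.Icc 0 1) = P :=
    Measure.restrict_eq_self_of_ae_mem (ae_mem_Icc hsupp)
  have hset : Set.Icc (0:ℝ) 1
      = Set.Icc 0 (1/4) ∪ (Set.Ioo (1/4) (1/2) ∪ Set.Icc (1/2) 1) := by
    ext x
    simp only [Set.mem_Icc, Set.mem_union, Set.mem_Ioo]
    constructor
    · rintro ⟨h0, h1⟩
      rcases le_or_gt x (1/4) with h | h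
      · exact Or.inl ⟨h0, h⟩
      · rcases lt_or_ge x (1/2) with h' | h'
        · exact Or.inr (Or.inl ⟨h, h'⟩)
        · exact Or.inr (Or.inr ⟨h', h1⟩)
    · rintro (⟨h0, h1⟩ | ⟨h0, h1⟩ | ⟨h0, h1⟩) <;> constructor <;> linarith
  have hgap : ∫ x in Set.Ioo (1/4 : ℝ) (1/2), f x ∂P = 0 := by
    rw [Measure.restrict_eq_zero.mpr (gap1_null hsupp hinv)]
    exact integral_zero_measure f
  have hdisj1 : Disjoint (Set.Icc (0:ℝ) (1/4)) (Set.Ioo (1/4) (1/2) ∪ Set.Icc (1/2) 1) := by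
    rw [Set.disjoint_left]
    rintro x ⟨-, hx2⟩ (⟨h, -⟩ | ⟨h, -⟩) <;> linarith
  have hdisj2 : Disjoint (Set.Ioo (1/4:ℝ) (1/2)) (Set.Icc (1/2) 1) := by
    rw [Set.disjoint_left]
    rintro x ⟨-, hx2⟩ ⟨h, -⟩
    linarith
  calc ∫ x, f x ∂P = ∫ x in Set.Icc (0:ℝ) 1, f x ∂P := by rw [hres]
  _ = _ := by
      rw [hset, setIntegral_union hdisj1 (measurableSet_Ioo.union measurableSet_Icc)
            hf.integrableOn hf.integrableOn,
          setIntegral_union hdisj2 measurableSet_Icc hf.integrableOn hf.integrableOn, hgap]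
      ring

lemma split2 (hsupp : P (Set.Icc 0 1) = 1) (hinv : Invariant P) (f : ℝ → ℝ)
    (hf : Integrable f P) :
    ∫ x in Set.Icc (1/2) 1, f x ∂P
      = (∫ x in Set.Icc (1/2) (5/8), f x ∂P) + ∫ x in Set.Icc (3/4) 1, f x ∂P := by
  have hset : Set.Icc (1/2:ℝ) 1
      = Set.Icc (1/2) (5/8) ∪ (Set.Ioo (5/8) (3/4) ∪ Set.Icc (3/4) 1) := by
    ext x
    simp only [Set.mem_Icc, Set.mem_union, Set.mem_Ioo]
    constructor
    · rintro ⟨h0, h1⟩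
      rcases le_or_gt x (5/8) with h | h
      · exact Or.inl ⟨h0, h⟩
      · rcases lt_or_ge x (3/4) with h' | h'
        · exact Or.inr (Or.inl ⟨h, h'⟩)
        · exact Or.inr (Or.inr ⟨h', h1⟩)
    · rintro (⟨h0, h1⟩ | ⟨h0, h1⟩ | ⟨h0, h1⟩) <;> constructor <;> linarith
  have hgap : ∫ x in Set.Ioo (5/8 : ℝ) (3/4), f x ∂P = 0 := by
    rw [Measure.restrict_eq_zero.mpr (gap2_null hsupp hinv)]
    exact integral_zero_measure f
  have hdisj1 : Disjoint (Set.Icc (1/2:ℝ) (5/8)) (Set.Ioo (5/8) (3/4) ∪ Set.Icc (3/4) 1) := by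
    rw [Set.disjoint_left]
    rintro x ⟨-, hx2⟩ (⟨h, -⟩ | ⟨h, -⟩) <;> linarith
  have hdisj2 : Disjoint (Set.Ioo (5/8:ℝ) (3/4)) (Set.Icc (3/4) 1) := by
    rw [Set.disjoint_left]
    rintro x ⟨-, hx2⟩ ⟨h, -⟩
    linarith
  rw [hset, setIntegral_union hdisj1 (measurableSet_Ioo.union measurableSet_Icc)
        hf.integrableOn hf.integrableOn,
      setIntegral_union hdisj2 measurableSet_Icc hf.integrableOn hf.integrableOn, hgap]
  ring


lemma iInf_pair (a b x : ℝ) :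
    (⨅ c : ({a, b} : Set ℝ), (x - (c : ℝ)) ^ 2) = min ((x - a)^2) ((x - b)^2) := by
  have hbdd : BddBelow (Set.range (fun c : ({a, b} : Set ℝ) => (x - (c : ℝ)) ^ 2)) :=
    ⟨0, by rintro y ⟨c, rfl⟩; positivity⟩
  apply le_antisymm
  · apply le_min
    · exact ciInf_le hbdd ⟨a, Set.mem_insert a {b}⟩
    · exact ciInf_le hbdd ⟨b, Set.mem_insert_of_mem a rfl⟩
  · apply le_ciInf
    rintro ⟨c, hc⟩
    rcases hc with rfl | hc
    · exact min_le_left _ _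
    · rw [Set.mem_singleton_iff] at hc
      subst hc
      exact min_le_right _ _

lemma iInf_single (a x : ℝ) :
    (⨅ c : ({a} : Set ℝ), (x - (c : ℝ)) ^ 2) = (x - a)^2 := by
  have hbdd : BddBelow (Set.range (fun c : ({a} : Set ℝ) => (x - (c : ℝ)) ^ 2)) :=
    ⟨0, by rintro y ⟨c, rfl⟩; positivity⟩
  apply le_antisymm
  · exact ciInf_le hbdd ⟨a, rfl⟩
  · apply le_ciInf
    rintro ⟨c, hc⟩
    rw [Set.mem_singleton_iff] at hc
    subst hc
    exact le_refl _

lemma distortion_pair (a b : ℝ) :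
    distortion P {a, b} = ∫ x, min ((x - a)^2) ((x - b)^2) ∂P := by
  unfold distortion
  congr 1
  funext x
  exact iInf_pair a b x

lemma distortion_single (a : ℝ) :
    distortion P {a} = ∫ x, (x - a)^2 ∂P := by
  unfold distortion
  congr 1
  funext x
  exact iInf_single a x

lemma distortion_nonneg (α : Set ℝ) : 0 ≤ distortion P α := by
  apply integral_nonneg
  intro x
  exact Real.iInf_nonneg (fun c => by positivity)

lemma quantErr_nonneg : 0 ≤ quantErr P 2 := by
  apply le_csInf
  · exact ⟨distortion P {0}, {0}, by simp, by simp, rfl⟩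
  · rintro r ⟨α, h1, h2, rfl⟩
    exact distortion_nonneg α

lemma bddBelow_SS : BddBelow {r : ℝ | ∃ α : Set ℝ, 1 ≤ α.ncard ∧ α.ncard ≤ 2 ∧ r = distortion P α} :=
  ⟨0, by rintro r ⟨α, h1, h2, rfl⟩; exact distortion_nonneg α⟩

lemma quantErr_le_pair (a b : ℝ) (hab : a ≠ b) :
    quantErr P 2 ≤ distortion P {a, b} := by
  apply csInf_le bddBelow_SS
  exact ⟨{a, b}, by rw [Set.ncard_pair hab]; norm_num, by rw [Set.ncard_pair hab], rfl⟩

def qd (c d : ℝ) : ℝ := c^2*(208/511) + 2*c*d*(4/7) + d^2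

lemma EQf (hsupp : P (Set.Icc 0 1) = 1) (hinv : Invariant P) (c d : ℝ) :
    ∫ x, (c*x + d)^2 ∂P = qd c d := by
  rw [int_sq hsupp, m1_eq hsupp hinv, m2_eq hsupp hinv, qd]

lemma EJ1 (hsupp : P (Set.Icc 0 1) = 1) (hinv : Invariant P) (c d : ℝ) :
    ∫ x in Set.Icc 0 (1/4), (c*x + d)^2 ∂P = (1/4) * qd (c/4) d := by
  rw [intJ1 hsupp hinv (fun x => (c*x + d)^2) (by fun_prop)]
  congr 1
  rw [show (fun x => (c*(x/4) + d)^2) = fun x => ((c/4)*x + d)^2 by funext x; ring_nf]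
  exact EQf hsupp hinv _ _

lemma EJ2 (hsupp : P (Set.Icc 0 1) = 1) (hinv : Invariant P) (c d : ℝ) :
    ∫ x in Set.Icc (1/2) (5/8), (c*x + d)^2 ∂P = (3/8) * qd (c/8) (c/2 + d) := by
  rw [intJ2 hsupp hinv (fun x => (c*x + d)^2) (by fun_prop)]
  congr 1
  rw [show (fun x => (c*(x/8 + 1/2) + d)^2) = fun x => ((c/8)*x + (c/2 + d))^2 by
    funext x; ring_nf]
  exact EQf hsupp hinv _ _

lemma EHalf (hsupp : P (Set.Icc 0 1) = 1) (hinv : Invariant P) (c d : ℝ) :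
    ∫ x in Set.Icc (1/2) 1, (c*x + d)^2 ∂P = qd c d - (1/4) * qd (c/4) d := by
  have h := split1 hsupp hinv (fun x => (c*x + d)^2) (integrable_of_cont hsupp _ (by fun_prop))
  rw [EQf hsupp hinv, EJ1 hsupp hinv] at h
  linarith

lemma EK (hsupp : P (Set.Icc 0 1) = 1) (hinv : Invariant P) (c d : ℝ) :
    ∫ x in Set.Icc (3/4) 1, (c*x + d)^2 ∂P
      = qd c d - (1/4) * qd (c/4) d - (3/8) * qd (c/8) (c/2 + d) := by
  have h := split2 hsupp hinv (fun x => (c*x + d)^2) (integrable_of_cont hsupp _ (by fun_prop))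
  rw [EHalf hsupp hinv, EJ2 hsupp hinv] at h
  linarith

lemma massHalf (hsupp : P (Set.Icc 0 1) = 1) (hinv : Invariant P) :
    (P (Set.Icc (1/2) 1)).toReal = 3/4 := by
  have h := split1 hsupp hinv (fun _ => (1:ℝ)) (integrable_const 1)
  simp only [setIntegral_const, integral_const, measure_univ, ENNReal.toReal_one,
    smul_eq_mul, mul_one, one_smul] at h
  have h1 := massJ1 hsupp hinv
  have h2 : (P.restrict (Set.Icc 0 (1/4)) Set.univ).toReal = (P (Set.Icc 0 (1/4))).toReal := by
    rw [Measure.restrict_apply_univ]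
  have h3 : (P.restrict (Set.Icc (1/2) 1) Set.univ).toReal
      = (P (Set.Icc (1/2) 1)).toReal := by
    rw [Measure.restrict_apply_univ]
  simp only [Measure.real, measure_univ, ENNReal.toReal_one] at h
  linarith [h]

lemma lb_set (hsupp : P (Set.Icc 0 1) = 1) {s : Set ℝ} (hs : MeasurableSet s)
    (g : ℝ → ℝ) (hg : Continuous g) (c : ℝ) (h : ∀ x ∈ s, c ≤ g x) :
    c * (P s).toReal ≤ ∫ x in s, g x ∂P :=
  by
  have := setIntegral_ge_of_const_le_real hs (measure_ne_top P s) h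
    (integrable_of_cont hsupp g hg).integrableOn
  exact this

lemma recJ1 (hsupp : P (Set.Icc 0 1) = 1) (hinv : Invariant P) (a b : ℝ) :
    ∫ x in Set.Icc 0 (1/4), min ((x - a)^2) ((x - b)^2) ∂P
      = (1/64) * distortion P {4*a, 4*b} := by
  rw [distortion_pair, intJ1 hsupp hinv (fun x => min ((x - a)^2) ((x - b)^2)) (by fun_prop)]
  have he : (fun x => min ((x/4 - a)^2) ((x/4 - b)^2))
      = fun x => (1/16) * min ((x - 4*a)^2) ((x - 4*b)^2) := by
    funext x
    rw [mul_min_of_nonneg _ _ (by norm_num : (0:ℝ) ≤ 1/16)]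
    congr 1 <;> ring
  rw [show (fun x => min (((x:ℝ)/4 - a)^2) ((x/4 - b)^2))
      = fun x => (1/16) * min ((x - 4*a)^2) ((x - 4*b)^2) from he, integral_const_mul]
  ring

-- Numeric inequality certificates (context-free for nlinarith speed)
lemma N1 (b : ℝ) : (288/3577 : ℝ) ≤ qd 1 (-b) := by
  unfold qd; nlinarith [sq_nonneg (b - 4/7)]

lemma N3 (a b : ℝ) : (1/4)*qd (1/4) (-a) + (qd 1 (-b) - (1/4) * qd (1/4) (-b))
    = 69/3577 + (1/4)*(a-1/7)^2 + (3/4)*(b-5/7)^2 := by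
  unfold qd; ring

lemma N2a (b : ℝ) (h : b < 19/28 ∨ 3/4 < b) :
    (63/64) * (69/3577) < qd 1 (-b) - (1/4) * qd (1/4) (-b) := by
  rcases h with h | h
  · unfold qd; nlinarith [sq_nonneg (b - 5/7)]
  · unfold qd; nlinarith [sq_nonneg (b - 5/7)]

lemma N2b (b : ℝ) :
    (69/3577 : ℝ) < 25/3136 + (qd 1 (-b) - (1/4) * qd (1/4) (-b)) := by
  unfold qd; nlinarith [sq_nonneg (b - 5/7)]

lemma N5 (a : ℝ) : (69/3577 : ℝ) < (1/4)*qd (1/4) (-a) + (3/8)*qd (1/8) (1/2 + -a) := by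
  unfold qd; nlinarith [sq_nonneg (a - 2/5)]

lemma N4a (a b : ℝ) (ha : 2/5 ≤ a) :
    (69/3577 : ℝ) < (1/4)*qd (1/4) (-a)
      + (qd 1 (-b) - (1/4)*qd (1/4) (-b) - (3/8)*qd (1/8) (1/2 + -b)) := by
  unfold qd
  nlinarith [sq_nonneg (b - 6/7),
    mul_nonneg (by linarith : (0:ℝ) ≤ a - 2/5) (by linarith : (0:ℝ) ≤ a - 2/5 + 18/35)]

lemma N4b (a b : ℝ) (ha : 3/8 < a) (hb : b ≤ 5/8) (hb2 : 1/2 < b) :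
    (69/3577 : ℝ) < (1/4)*qd (1/4) (-a)
      + (qd 1 (-b) - (1/4)*qd (1/4) (-b) - (3/8)*qd (1/8) (1/2 + -b)) := by
  unfold qd
  nlinarith [mul_nonneg (by linarith : (0:ℝ) ≤ a - 3/8) (by linarith : (0:ℝ) ≤ a - 3/8 + 26/56),
    mul_nonneg (by linarith : (0:ℝ) ≤ 5/8 - b) (by linarith : (0:ℝ) ≤ 5/8 - b + 26/56)]

lemma N4ciP (a b : ℝ) (h1 : 1 < a+b) (hb : 5/8 < b) :
    (69/3577 : ℝ) < (1/4)*qd (1/4) (-a)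
      + (3/8)*((b - 17/32)^2 * (1/4) + (qd (1/8) (1/2 - b) - (1/4)*qd (1/8/4) (1/2 - b)))
      + (qd 1 (-b) - (1/4)*qd (1/4) (-b) - (3/8)*qd (1/8) (1/2 + -b)) := by
  unfold qd
  nlinarith [sq_nonneg (a + b - 1), sq_nonneg (b - 752/1000), sq_nonneg (a - 1/4),
    mul_nonneg (by linarith : (0:ℝ) ≤ a + b - 1) (by linarith : (0:ℝ) ≤ b - 5/8)]

lemma N4ciQ (a b : ℝ) (h1 : 1 < a+b) (hb : 5/8 < b) :
    (69/3577 : ℝ) < (1/4)*qd (1/4) (-a)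
      + (3/8)*((1/2 - a)^2 * (1/4) + (qd (1/8) (1/2 - b) - (1/4)*qd (1/8/4) (1/2 - b)))
      + (qd 1 (-b) - (1/4)*qd (1/4) (-b) - (3/8)*qd (1/8) (1/2 + -b)) := by
  unfold qd
  nlinarith [sq_nonneg (a + b - 1), sq_nonneg (b - 76/100), sq_nonneg (a - 24/100),
    mul_nonneg (by linarith : (0:ℝ) ≤ a + b - 1) (by linarith : (0:ℝ) ≤ b - 5/8)]

lemma N4cii (a b : ℝ) (h1 : 17/16 ≤ a+b) (h2 : a+b ≤ 9/8) :
    (69/3577 : ℝ) < (1/4)*qd (1/4) (-a)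
      + (3/8)*((1/4)*qd (1/8/4) (1/2 - a)
          + (qd (1/8) (1/2 - b) - (1/4)*qd (1/8/4) (1/2 - b)))
      + (qd 1 (-b) - (1/4)*qd (1/4) (-b) - (3/8)*qd (1/8) (1/2 + -b)) := by
  unfold qd
  nlinarith [sq_nonneg (a + b - 17/16), sq_nonneg (b - 768/1000), sq_nonneg (a - 294/1000)]

lemma N4ciiiP (a b : ℝ) (h1 : 9/8 < a+b) (hb : 5/8 < b) :
    (69/3577 : ℝ) < (1/4)*qd (1/4) (-a)
      + (3/8)*((1/4)*qd (1/8/4) (1/2 - a) + (b - 5/8)^2 * (3/4))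
      + (qd 1 (-b) - (1/4)*qd (1/4) (-b) - (3/8)*qd (1/8) (1/2 + -b)) := by
  unfold qd
  nlinarith [sq_nonneg (a + b - 9/8), sq_nonneg (b - 7997/10000), sq_nonneg (a - 3253/10000)]

lemma N4ciiiQ (a b : ℝ) :
    (69/3577 : ℝ) < (1/4)*qd (1/4) (-a)
      + (3/8)*((1/4)*qd (1/8/4) (1/2 - a) + (9/16 - a)^2 * (3/4))
      + (qd 1 (-b) - (1/4)*qd (1/4) (-b) - (3/8)*qd (1/8) (1/2 + -b)) := by
  unfold qd
  nlinarith [sq_nonneg (b - 6/7), sq_nonneg (a - 388/1000)]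

lemma key (hsupp : P (Set.Icc 0 1) = 1) (hinv : Invariant P) (a b : ℝ) (hab : a < b) :
    distortion P {a, b} = 69/3577 + (1/4)*(a - 1/7)^2 + (3/4)*(b - 5/7)^2 ∨
    (63/64)*(69/3577) + (1/64)*quantErr P 2 < distortion P {a, b} ∨
    (69/3577 : ℝ) < distortion P {a, b} := by
  have hd := distortion_pair (P := P) a b
  have hcont : Continuous (fun x : ℝ => min ((x - a)^2) ((x - b)^2)) := by fun_prop
  have hint : Integrable (fun x : ℝ => min ((x - a)^2) ((x - b)^2)) P :=
    integrable_of_cont hsupp _ hcont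
  have hsplit := split1 hsupp hinv _ hint
  set m : ℝ := (a+b)/2 with hm
  have hminL : ∀ x : ℝ, x ≤ m → min ((x - a)^2) ((x - b)^2) = (x - a)^2 := by
    intro x hx
    apply min_eq_left
    nlinarith [mul_nonneg (sub_nonneg.mpr hab.le)
      (by simp only [hm] at hx; linarith : (0:ℝ) ≤ a + b - 2*x)]
  have hminR : ∀ x : ℝ, m ≤ x → min ((x - a)^2) ((x - b)^2) = (x - b)^2 := by
    intro x hx
    apply min_eq_right
    nlinarith [mul_nonneg (sub_nonneg.mpr hab.le)
      (by simp only [hm] at hx; linarith : (0:ℝ) ≤ 2*x - a - b)]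
  rcases lt_or_ge m (1/4) with hm1 | hm1
  · -- m < 1/4
    have hHalf : ∫ x in Set.Icc (1/2) 1, min ((x - a)^2) ((x - b)^2) ∂P
        = qd 1 (-b) - (1/4) * qd (1/4) (-b) := by
      rw [show ∫ x in Set.Icc (1/2:ℝ) 1, min ((x - a)^2) ((x - b)^2) ∂P
          = ∫ x in Set.Icc (1/2:ℝ) 1, (1*x + (-b))^2 ∂P from
        setIntegral_congr_fun measurableSet_Icc (fun x hx => by
          rw [hminR x (by linarith [hx.1] : m ≤ x)]; ring)]
      exact EHalf hsupp hinv 1 (-b)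
    have hJ1 := recJ1 hsupp hinv a b
    have hq := quantErr_le_pair (P := P) (4*a) (4*b) (by intro h; exact hab.ne (by linarith))
    by_cases hb : 19/28 ≤ b ∧ b ≤ 3/4
    · right; right
      have hJ1b : (25/784) * (P (Set.Icc 0 (1/4))).toReal
          ≤ ∫ x in Set.Icc 0 (1/4), min ((x - a)^2) ((x - b)^2) ∂P := by
        apply lb_set hsupp measurableSet_Icc _ hcont
        intro x hx
        have hx0 : (0:ℝ) ≤ x := hx.1
        have hx4 : x ≤ 1/4 := hx.2
        have hat : a < -(5/28) := by simp only [hm] at hm1; linarith [hb.1]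
        apply le_min
        · nlinarith
        · nlinarith [hb.1]
      rw [massJ1 hsupp hinv] at hJ1b
      have hN := N2b b
      rw [hd, hsplit, hHalf]
      linarith
    · right; left
      have hbb : b < 19/28 ∨ 3/4 < b := by
        by_cases h19 : 19/28 ≤ b
        · right; push_neg at hb; linarith [hb h19]
        · left; linarith [not_le.mp h19]
      have hEH := N2a b hbb
      have hJ1ge : (1/64) * quantErr P 2
          ≤ ∫ x in Set.Icc 0 (1/4), min ((x - a)^2) ((x - b)^2) ∂P := by
        rw [hJ1]; linarith
      rw [hd, hsplit, hHalf]
      linarith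
  rcases le_or_gt m (1/2) with hm2 | hm2
  · -- 1/4 ≤ m ≤ 1/2 : the exact case
    left
    have hJ1 : ∫ x in Set.Icc 0 (1/4), min ((x - a)^2) ((x - b)^2) ∂P
        = (1/4) * qd (1/4) (-a) := by
      rw [show ∫ x in Set.Icc (0:ℝ) (1/4), min ((x - a)^2) ((x - b)^2) ∂P
          = ∫ x in Set.Icc (0:ℝ) (1/4), (1*x + (-a))^2 ∂P from
        setIntegral_congr_fun measurableSet_Icc (fun x hx => by
          rw [hminL x (by linarith [hx.2] : x ≤ m)]; ring)]
      exact EJ1 hsupp hinv 1 (-a)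
    have hHalf : ∫ x in Set.Icc (1/2) 1, min ((x - a)^2) ((x - b)^2) ∂P
        = qd 1 (-b) - (1/4) * qd (1/4) (-b) := by
      rw [show ∫ x in Set.Icc (1/2:ℝ) 1, min ((x - a)^2) ((x - b)^2) ∂P
          = ∫ x in Set.Icc (1/2:ℝ) 1, (1*x + (-b))^2 ∂P from
        setIntegral_congr_fun measurableSet_Icc (fun x hx => by
          rw [hminR x (by linarith [hx.1] : m ≤ x)]; ring)]
      exact EHalf hsupp hinv 1 (-b)
    rw [hd, hsplit, hJ1, hHalf]
    exact N3 a b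
  · -- m > 1/2
    right; right
    rcases lt_or_ge m (5/8) with hm3 | hm3
    · -- 1/2 < m < 5/8
      have hsplit2 := split2 hsupp hinv _ hint
      have hJ1 : ∫ x in Set.Icc 0 (1/4), min ((x - a)^2) ((x - b)^2) ∂P
          = (1/4) * qd (1/4) (-a) := by
        rw [show ∫ x in Set.Icc (0:ℝ) (1/4), min ((x - a)^2) ((x - b)^2) ∂P
            = ∫ x in Set.Icc (0:ℝ) (1/4), (1*x + (-a))^2 ∂P from
          setIntegral_congr_fun measurableSet_Icc (fun x hx => by
            rw [hminL x (by linarith [hx.2] : x ≤ m)]; ring)]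
        exact EJ1 hsupp hinv 1 (-a)
      have hK : ∫ x in Set.Icc (3/4) 1, min ((x - a)^2) ((x - b)^2) ∂P
          = qd 1 (-b) - (1/4) * qd (1/4) (-b) - (3/8) * qd (1/8) (1/2 + -b) := by
        rw [show ∫ x in Set.Icc (3/4:ℝ) 1, min ((x - a)^2) ((x - b)^2) ∂P
            = ∫ x in Set.Icc (3/4:ℝ) 1, (1*x + (-b))^2 ∂P from
          setIntegral_congr_fun measurableSet_Icc (fun x hx => by
            rw [hminR x (by linarith [hx.1] : m ≤ x)]; ring)]
        exact EK hsupp hinv 1 (-b)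
      have hJ2cov : ∫ x in Set.Icc (1/2) (5/8), min ((x - a)^2) ((x - b)^2) ∂P
          = (3/8) * ∫ y, min ((y/8 + 1/2 - a)^2) ((y/8 + 1/2 - b)^2) ∂P :=
        intJ2 hsupp hinv (fun x => min ((x - a)^2) ((x - b)^2)) hcont
      have hgcont : Continuous (fun y : ℝ => min ((y/8 + 1/2 - a)^2) ((y/8 + 1/2 - b)^2)) := by
        fun_prop
      have hgint : Integrable (fun y : ℝ => min ((y/8 + 1/2 - a)^2) ((y/8 + 1/2 - b)^2)) P :=
        integrable_of_cont hsupp _ hgcont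
      have hgsplit := split1 hsupp hinv _ hgint
      rcases le_or_gt (2/5) a with ha | ha
      · -- 4a
        have hJ2nn : 0 ≤ ∫ x in Set.Icc (1/2) (5/8), min ((x - a)^2) ((x - b)^2) ∂P :=
          setIntegral_nonneg measurableSet_Icc
            (fun x _ => le_min (sq_nonneg _) (sq_nonneg _))
        have hfin := N4a a b ha
        rw [hd, hsplit, hsplit2, hJ1, hK]
        linarith
      rcases le_or_gt b (5/8) with hb | hb
      · -- 4b
        have hb2 : 1/2 < b := by simp only [hm] at hm2; linarith
        have ha38 : 3/8 < a := by simp only [hm] at hm2; linarith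
        have hJ2nn : 0 ≤ ∫ x in Set.Icc (1/2) (5/8), min ((x - a)^2) ((x - b)^2) ∂P :=
          setIntegral_nonneg measurableSet_Icc
            (fun x _ => le_min (sq_nonneg _) (sq_nonneg _))
        have hfin := N4b a b ha38 hb hb2
        rw [hd, hsplit, hsplit2, hJ1, hK]
        linarith
      · -- 4c : a < 2/5, 5/8 < b
        have hab1 : 1 < a + b := by simp only [hm] at hm2; linarith
        have hab2 : a + b < 5/4 := by simp only [hm] at hm3; linarith
        rcases lt_or_ge (a+b) (17/16) with hc1 | hc1
        · -- 4c-i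
          have hgHalf : ∫ y in Set.Icc (1/2) 1, min ((y/8 + 1/2 - a)^2) ((y/8 + 1/2 - b)^2) ∂P
              = qd (1/8) (1/2 - b) - (1/4) * qd (1/8/4) (1/2 - b) := by
            rw [show ∫ y in Set.Icc (1/2:ℝ) 1, min ((y/8 + 1/2 - a)^2) ((y/8 + 1/2 - b)^2) ∂P
                = ∫ y in Set.Icc (1/2:ℝ) 1, ((1/8)*y + (1/2 - b))^2 ∂P from
              setIntegral_congr_fun measurableSet_Icc (fun y hy => by
                have h := hminR (y/8 + 1/2) (by simp only [hm]; linarith [hy.1])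
                rw [h]; ring)]
            exact EHalf hsupp hinv (1/8) (1/2 - b)
          have hgJ1 : (min ((1/2 - a)^2) ((b - 17/32)^2)) * (P (Set.Icc 0 (1/4))).toReal
              ≤ ∫ y in Set.Icc 0 (1/4), min ((y/8 + 1/2 - a)^2) ((y/8 + 1/2 - b)^2) ∂P := by
            apply lb_set hsupp measurableSet_Icc _ hgcont
            intro y hy
            have h1 : (1/2 - a)^2 ≤ (y/8 + 1/2 - a)^2 := by nlinarith [hy.1, hy.2]
            have h2 : (b - 17/32)^2 ≤ (y/8 + 1/2 - b)^2 := by nlinarith [hy.1, hy.2]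
            exact le_min ((min_le_left _ _).trans h1) ((min_le_right _ _).trans h2)
          rw [massJ1 hsupp hinv] at hgJ1
          rw [hd, hsplit, hsplit2, hJ1, hK, hJ2cov, hgsplit, hgHalf]
          rcases le_total ((b - 17/32)^2) ((1/2 - a)^2) with hbr | hbr
          · rw [min_eq_right hbr] at hgJ1
            have hfin := N4ciP a b hab1 hb
            linarith
          · rw [min_eq_left hbr] at hgJ1
            have hfin := N4ciQ a b hab1 hb
            linarith
        · -- a+b ≥ 17/16
          have hgJ1 : ∫ y in Set.Icc 0 (1/4), min ((y/8 + 1/2 - a)^2) ((y/8 + 1/2 - b)^2) ∂P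
              = (1/4) * qd (1/8/4) (1/2 - a) := by
            rw [show ∫ y in Set.Icc (0:ℝ) (1/4), min ((y/8 + 1/2 - a)^2) ((y/8 + 1/2 - b)^2) ∂P
                = ∫ y in Set.Icc (0:ℝ) (1/4), ((1/8)*y + (1/2 - a))^2 ∂P from
              setIntegral_congr_fun measurableSet_Icc (fun y hy => by
                have h := hminL (y/8 + 1/2) (by simp only [hm]; linarith [hy.2])
                rw [h]; ring)]
            exact EJ1 hsupp hinv (1/8) (1/2 - a)
          rcases le_or_gt (a+b) (9/8) with hc2 | hc2
          · -- 4c-ii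
            have hgHalf : ∫ y in Set.Icc (1/2) 1, min ((y/8 + 1/2 - a)^2) ((y/8 + 1/2 - b)^2) ∂P
                = qd (1/8) (1/2 - b) - (1/4) * qd (1/8/4) (1/2 - b) := by
              rw [show ∫ y in Set.Icc (1/2:ℝ) 1, min ((y/8 + 1/2 - a)^2) ((y/8 + 1/2 - b)^2) ∂P
                  = ∫ y in Set.Icc (1/2:ℝ) 1, ((1/8)*y + (1/2 - b))^2 ∂P from
                setIntegral_congr_fun measurableSet_Icc (fun y hy => by
                  have h := hminR (y/8 + 1/2) (by simp only [hm]; linarith [hy.1])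
                  rw [h]; ring)]
              exact EHalf hsupp hinv (1/8) (1/2 - b)
            rw [hd, hsplit, hsplit2, hJ1, hK, hJ2cov, hgsplit, hgHalf, hgJ1]
            have hfin := N4cii a b hc1 hc2
            linarith
          · -- 4c-iii
            have hgHalf : (min ((9/16 - a)^2) ((b - 5/8)^2)) * (P (Set.Icc (1/2) 1)).toReal
                ≤ ∫ y in Set.Icc (1/2) 1, min ((y/8 + 1/2 - a)^2) ((y/8 + 1/2 - b)^2) ∂P := by
              apply lb_set hsupp measurableSet_Icc _ hgcont
              intro y hy
              have h1 : (9/16 - a)^2 ≤ (y/8 + 1/2 - a)^2 := by nlinarith [hy.1, hy.2]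
              have h2 : (b - 5/8)^2 ≤ (y/8 + 1/2 - b)^2 := by nlinarith [hy.1, hy.2]
              exact le_min ((min_le_left _ _).trans h1) ((min_le_right _ _).trans h2)
            rw [massHalf hsupp hinv] at hgHalf
            rw [hd, hsplit, hsplit2, hJ1, hK, hJ2cov, hgsplit, hgJ1]
            rcases le_total ((b - 5/8)^2) ((9/16 - a)^2) with hbr | hbr
            · rw [min_eq_right hbr] at hgHalf
              have hfin := N4ciiiP a b hc2 hb
              linarith
            · rw [min_eq_left hbr] at hgHalf
              have hfin := N4ciiiQ a b
              linarith
    · -- m ≥ 5/8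
      have hsplit2 := split2 hsupp hinv _ hint
      have hJ1 : ∫ x in Set.Icc 0 (1/4), min ((x - a)^2) ((x - b)^2) ∂P
          = (1/4) * qd (1/4) (-a) := by
        rw [show ∫ x in Set.Icc (0:ℝ) (1/4), min ((x - a)^2) ((x - b)^2) ∂P
            = ∫ x in Set.Icc (0:ℝ) (1/4), (1*x + (-a))^2 ∂P from
          setIntegral_congr_fun measurableSet_Icc (fun x hx => by
            rw [hminL x (by linarith [hx.2] : x ≤ m)]; ring)]
        exact EJ1 hsupp hinv 1 (-a)
      have hJ2 : ∫ x in Set.Icc (1/2) (5/8), min ((x - a)^2) ((x - b)^2) ∂P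
          = (3/8) * qd (1/8) (1/2 + -a) := by
        rw [show ∫ x in Set.Icc (1/2:ℝ) (5/8), min ((x - a)^2) ((x - b)^2) ∂P
            = ∫ x in Set.Icc (1/2:ℝ) (5/8), (1*x + (-a))^2 ∂P from
          setIntegral_congr_fun measurableSet_Icc (fun x hx => by
            rw [hminL x (by linarith [hx.2] : x ≤ m)]; ring)]
        exact EJ2 hsupp hinv 1 (-a)
      have hKnn : 0 ≤ ∫ x in Set.Icc (3/4) 1, min ((x - a)^2) ((x - b)^2) ∂P :=
        setIntegral_nonneg measurableSet_Icc
          (fun x _ => le_min (sq_nonneg _) (sq_nonneg _))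
      have hfin := N5 a
      rw [hd, hsplit, hsplit2, hJ1, hJ2]
      linarith

lemma dist_single_qd (hsupp : P (Set.Icc 0 1) = 1) (hinv : Invariant P) (c : ℝ) :
    distortion P {c} = qd 1 (-c) := by
  rw [distortion_single, show (fun x : ℝ => (x - c)^2) = fun x : ℝ => (1*x + (-c))^2 from
    by funext x; ring]
  exact EQf hsupp hinv 1 (-c)

lemma dist_opt (hsupp : P (Set.Icc 0 1) = 1) (hinv : Invariant P) :
    distortion P {(1/7 : ℝ), 5/7} = 69/3577 := by
  have hd := distortion_pair (P := P) (1/7) (5/7)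
  have hcont : Continuous (fun x : ℝ => min ((x - 1/7)^2) ((x - 5/7)^2)) := by fun_prop
  have hint : Integrable (fun x : ℝ => min ((x - 1/7)^2) ((x - 5/7)^2)) P :=
    integrable_of_cont hsupp _ hcont
  have hsplit := split1 hsupp hinv _ hint
  have hJ1 : ∫ x in Set.Icc 0 (1/4), min ((x - 1/7)^2) ((x - 5/7)^2) ∂P
      = (1/4) * qd (1/4) (-(1/7)) := by
    rw [show ∫ x in Set.Icc (0:ℝ) (1/4), min ((x - 1/7)^2) ((x - 5/7)^2) ∂P
        = ∫ x in Set.Icc (0:ℝ) (1/4), (1*x + (-(1/7)))^2 ∂P from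
      setIntegral_congr_fun measurableSet_Icc (fun x hx => by
        rw [min_eq_left (by nlinarith [hx.2] : (x - 1/7)^2 ≤ (x - 5/7)^2)]; ring)]
    exact EJ1 hsupp hinv 1 (-(1/7))
  have hHalf : ∫ x in Set.Icc (1/2) 1, min ((x - 1/7)^2) ((x - 5/7)^2) ∂P
      = qd 1 (-(5/7)) - (1/4) * qd (1/4) (-(5/7)) := by
    rw [show ∫ x in Set.Icc (1/2:ℝ) 1, min ((x - 1/7)^2) ((x - 5/7)^2) ∂P
        = ∫ x in Set.Icc (1/2:ℝ) 1, (1*x + (-(5/7)))^2 ∂P from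
      setIntegral_congr_fun measurableSet_Icc (fun x hx => by
        rw [min_eq_right (by nlinarith [hx.1] : (x - 5/7)^2 ≤ (x - 1/7)^2)]; ring)]
    exact EHalf hsupp hinv 1 (-(5/7))
  rw [hd, hsplit, hJ1, hHalf]
  unfold qd; norm_num

lemma key_ge (hsupp : P (Set.Icc 0 1) = 1) (hinv : Invariant P) (a b : ℝ) (hab : a < b) :
    (63/64)*(69/3577) + (1/64)*quantErr P 2 ≤ distortion P {a, b} ∨
    (69/3577 : ℝ) ≤ distortion P {a, b} := by
  rcases key hsupp hinv a b hab with h | h | h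
  · right; rw [h]; nlinarith [sq_nonneg (a - 1/7), sq_nonneg (b - 5/7)]
  · left; exact h.le
  · right; exact h.le

lemma quantErr_eq (hsupp : P (Set.Icc 0 1) = 1) (hinv : Invariant P) :
    quantErr P 2 = 69/3577 := by
  have hle : quantErr P 2 ≤ 69/3577 := by
    have h := quantErr_le_pair (P := P) (1/7) (5/7) (by norm_num)
    rwa [dist_opt hsupp hinv] at h
  have hge : (69/3577:ℝ) ≤ quantErr P 2 := by
    have hmin : min (69/3577 : ℝ) ((63/64)*(69/3577) + (1/64)*quantErr P 2) ≤ quantErr P 2 := by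
      apply le_csInf
      · exact ⟨distortion P {0}, {0}, by simp, by simp, rfl⟩
      · rintro r ⟨α, h1, h2, rfl⟩
        interval_cases h : α.ncard
        · obtain ⟨c, rfl⟩ := Set.ncard_eq_one.mp h
          have hN := N1 c
          have hq := dist_single_qd hsupp hinv c
          calc min (69/3577 : ℝ) ((63/64)*(69/3577) + (1/64)*quantErr P 2)
              ≤ 69/3577 := min_le_left _ _
          _ ≤ distortion P {c} := by rw [hq]; linarith
        · obtain ⟨a, b, hne, rfl⟩ := Set.ncard_eq_two.mp h
          have hkey : (63/64)*(69/3577) + (1/64)*quantErr P 2 ≤ distortion P {a, b} ∨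
              (69/3577 : ℝ) ≤ distortion P {a, b} := by
            rcases hne.lt_or_gt with hlt | hlt
            · exact key_ge hsupp hinv a b hlt
            · rw [Set.pair_comm a b]
              exact key_ge hsupp hinv b a hlt
          rcases hkey with h' | h'
          · exact (min_le_right _ _).trans h'
          · exact (min_le_left _ _).trans h'
    rcases le_total (69/3577 : ℝ) ((63/64)*(69/3577) + (1/64)*quantErr P 2) with hc | hc
    · rw [min_eq_left hc] at hmin; exact hmin
    · rw [min_eq_right hc] at hmin; linarith
  linarith

lemma unique_pair (hsupp : P (Set.Icc 0 1) = 1) (hinv : Invariant P) (a b : ℝ) (hlt : a < b)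
    (h3 : distortion P {a, b} = 69/3577) : a = 1/7 ∧ b = 5/7 := by
  rcases key hsupp hinv a b hlt with h | h | h
  · rw [h3] at h
    have hs1 : (a - 1/7)^2 = 0 := by
      nlinarith [sq_nonneg (a - 1/7), sq_nonneg (b - 5/7)]
    have hs2 : (b - 5/7)^2 = 0 := by
      nlinarith [sq_nonneg (a - 1/7), sq_nonneg (b - 5/7)]
    constructor
    · have h0 : a - 1/7 = 0 := by
        have := sq_eq_zero_iff.mp hs1
        exact this
      linarith
    · have h0 : b - 5/7 = 0 := by
        have := sq_eq_zero_iff.mp hs2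
        exact this
      linarith
  · rw [h3, quantErr_eq hsupp hinv] at h
    norm_num at h
  · rw [h3] at h
    norm_num at h

lemma optimal_unique (hsupp : P (Set.Icc 0 1) = 1) (hinv : Invariant P) (α : Set ℝ)
    (hopt : IsOptimal P 2 α) : α = ({1/7, 5/7} : Set ℝ) := by
  obtain ⟨h1, h2, h3⟩ := hopt
  rw [quantErr_eq hsupp hinv] at h3
  interval_cases h : α.ncard
  · obtain ⟨c, rfl⟩ := Set.ncard_eq_one.mp h
    exfalso
    have hq := dist_single_qd hsupp hinv c
    have hN := N1 c
    rw [h3] at hq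
    linarith
  · obtain ⟨a, b, hne, rfl⟩ := Set.ncard_eq_two.mp h
    rcases hne.lt_or_gt with hlt | hlt
    · obtain ⟨ha, hb⟩ := unique_pair hsupp hinv a b hlt h3
      rw [ha, hb]
    · rw [Set.pair_comm a b] at h3 ⊢
      obtain ⟨hb, ha⟩ := unique_pair hsupp hinv b a hlt h3
      rw [ha, hb]

lemma optimal_opt (hsupp : P (Set.Icc 0 1) = 1) (hinv : Invariant P) :
    IsOptimal P 2 ({1/7, 5/7} : Set ℝ) := by
  refine ⟨?_, ?_, ?_⟩
  · rw [Set.ncard_pair (by norm_num : (1/7:ℝ) ≠ 5/7)]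
    norm_num
  · rw [Set.ncard_pair (by norm_num : (1/7:ℝ) ≠ 5/7)]
  · rw [dist_opt hsupp hinv, quantErr_eq hsupp hinv]

end QAux

/-- `{1/7, 5/7}` is the unique optimal set of two-means for `P`, and `V₂ = 69/3577`. -/
theorem stmt_5 (P : Measure ℝ) [IsProbabilityMeasure P]
    (hsupp : P (Set.Icc 0 1) = 1) (hinv : Invariant P) :
    IsOptimal P 2 ({1 / 7, 5 / 7} : Set ℝ) ∧
    (∀ α : Set ℝ, IsOptimal P 2 α → α = ({1 / 7, 5 / 7} : Set ℝ)) ∧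
    quantErr P 2 = 69 / 3577 := by
  exact ⟨QAux.optimal_opt hsupp hinv,
    fun α h => QAux.optimal_unique hsupp hinv α h,
    QAux.quantErr_eq hsupp hinv⟩
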